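/- Let X, Y, Z be disjoint sets each of size n and let w assign positive integer weights to elements of X ∪ Y ∪ Z such that all subsets of size at most 3 have pairwise distinct total weights. Suppose the 3n elements are partitioned into n groups, each group paired with a value M − w(t_B) for some triple t_B of size 3, such that the total weight of the small elements in each group equals w(t_B). Then every group contains exactly three small elements. -/
import Mathlib


/-- Second structural lemma of the Bin Filling reduction: if the `3n` small
elements are partitioned into `n` groups, each group's total weight equalling
the weight of some size-3 triple, and all subsets of size at most 3 have
pairwise distinct weights, then every group has exactly three elements. -/
theorem every_group_has_three_elements {U : Type*} [Fintype U] [DecidableEq U]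
    (n : ℕ) (hcard : Fintype.card U = 3 * n)
    (w : U → ℕ) (hw : ∀ u, 0 < w u)
    (hsep : ∀ A B : Finset U, A.card ≤ 3 → B.card ≤ 3 →
      ∑ x ∈ A, w x = ∑ x ∈ B, w x → A = B)
    (g : Fin n → Finset U) (hpart : ∀ u : U, ∃! b, u ∈ g b)
    (t : Fin n → Finset U) (ht : ∀ b, (t b).card = 3)
    (heq : ∀ b, ∑ x ∈ g b, w x = ∑ x ∈ t b, w x) :
    ∀ b, (g b).card = 3 := by
  -- If a group has card ≤ 3, then it equals its triple, so card = 3.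
  have key : ∀ b, (g b).card ≤ 3 → (g b).card = 3 := by
    intro b hb
    have := hsep (g b) (t b) hb (le_of_eq (ht b)) (heq b)
    rw [this, ht b]
  -- Each group has card ≥ 3.
  have hge : ∀ b, 3 ≤ (g b).card := by
    intro b
    by_contra h
    push_neg at h
    have := key b (le_of_lt (Nat.lt_of_lt_of_le h (by norm_num)))
    omega
  -- fiber function
  classical
  let f : U → Fin n := fun u => (hpart u).choose
  have hf : ∀ u, u ∈ g (f u) := fun u => (hpart u).choose_spec.1
  have hmem : ∀ u b, u ∈ g b ↔ f u = b := by
    intro u b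
    constructor
    · intro h
      exact ((hpart u).choose_spec.2 b h).symm
    · rintro rfl; exact hf u
  have hsum : ∑ b, (g b).card = 3 * n := by
    have hgb : ∀ b, g b = Finset.univ.filter (fun u => f u = b) := by
      intro b
      ext u
      simp [hmem u b]
    calc ∑ b, (g b).card = ∑ b, (Finset.univ.filter (fun u => f u = b)).card := by
          simp only [hgb]
      _ = (Finset.univ : Finset U).card := by
          rw [← Finset.card_eq_sum_card_fiberwise (fun u _ => Finset.mem_univ (f u))]
      _ = 3 * n := by rw [Finset.card_univ, hcard]
  -- Each ≥ 3 and total = 3n forces each = 3.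
  intro b
  by_contra h
  have hgt : 3 < (g b).card := lt_of_le_of_ne (hge b) (Ne.symm h)
  have : 3 * n < ∑ b, (g b).card := by
    calc 3 * n = ∑ _b : Fin n, 3 := by simp [mul_comm]
      _ < ∑ b, (g b).card :=
        Finset.sum_lt_sum (fun i _ => hge i) ⟨b, Finset.mem_univ b, hgt⟩
  omega
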